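/- Let (X_t, d_t) for t ∈ T be separable metric spaces, and let X ⊆ ∏_{t∈T} X_t be a Baire space (with the product topology) that is dense in Y = ∏_{t∈T} X_t equipped with the topology of uniform convergence on T. Then every uncountable regular cardinal is a caliber of X, and hence X is a strongly Baire space. -/

import Mathlib

universe u

def IsCaliber (X : Type u) [TopologicalSpace X] (κ : Cardinal.{u}) : Prop :=
  ∀ (ι : Type u) (U : ι → Set X), Cardinal.mk ι = κ →
    (∀ i, IsOpen (U i) ∧ (U i).Nonempty) →
    ∃ B : Set ι, Cardinal.mk B = κ ∧ (⋂ i ∈ B, U i).Nonempty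

/-- `X` is strongly Baire if for every ordinal `α` and all increasing families
`(A ξ : ξ < α)`, `(B ξ : ξ < α)` of closed subsets of `X` such that `(B ξ)` occupies
`(A ξ)` (i.e. `A ξ ⊆ B ξ` for all `ξ < α` and `A β ⊆ ⋃_{ξ<β} B ξ` for limit `β < α`),
the interior of `⋃_{ξ<α} A ξ` is contained in the closure of `⋃_{ξ<α} interior (B ξ)`. -/
def StronglyBaire (X : Type u) [TopologicalSpace X] : Prop :=
  ∀ (α : Ordinal.{u}) (A B : Ordinal.{u} → Set X),
    (∀ ξ < α, IsClosed (A ξ)) → (∀ ξ < α, IsClosed (B ξ)) →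
    (∀ ξ η, ξ ≤ η → η < α → A ξ ⊆ A η) →
    (∀ ξ η, ξ ≤ η → η < α → B ξ ⊆ B η) →
    (∀ ξ < α, A ξ ⊆ B ξ) →
    (∀ β, Order.IsSuccLimit β → β < α → A β ⊆ ⋃ ξ ∈ Set.Iio β, B ξ) →
    interior (⋃ ξ ∈ Set.Iio α, A ξ) ⊆ closure (⋃ ξ ∈ Set.Iio α, interior (B ξ))

open Cardinal Set
lemma pigeon {ι β : Type u} {κ : Cardinal.{u}} (hκ : κ.IsRegular) {A : Set ι}
    (hA : #A = κ) (f : ι → β) (hβ : #β < κ) :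
    ∃ b, #({i ∈ A | f i = b} : Set ι) = κ := by
  by_contra h
  push_neg at h
  have hle : ∀ b, #({i ∈ A | f i = b} : Set ι) < κ := by
    intro b
    exact lt_of_le_of_ne ((Cardinal.mk_le_mk_of_subset (fun i hi => hi.1)).trans hA.le) (h b)
  have hcover : A ⊆ ⋃ b, {i ∈ A | f i = b} := fun i hi => mem_iUnion.2 ⟨f i, hi, rfl⟩
  have : κ ≤ Cardinal.sum fun b => #({i ∈ A | f i = b} : Set ι) :=
    hA ▸ (Cardinal.mk_le_mk_of_subset hcover).trans Cardinal.mk_iUnion_le_sum_mk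
  exact this.not_gt (Cardinal.sum_lt_of_isRegular hκ hβ hle)
open Cardinal Set

lemma mk_biUnion_lt {X ι' : Type u} {κ : Cardinal.{u}} (hκ : κ.IsRegular) {s : Set ι'}
    {g : ι' → Set X} (hs : #s < κ) (hg : ∀ i ∈ s, #(g i) < κ) : #(⋃ i ∈ s, g i) < κ := by
  rw [Set.biUnion_eq_iUnion]
  exact lt_of_le_of_lt Cardinal.mk_iUnion_le_sum_mk
    (Cardinal.sum_lt_of_isRegular hκ hs fun i => hg i i.2)

lemma disjoint_subfamily {ι T : Type u} {κ : Cardinal.{u}} (hκ : κ.IsRegular)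
    (hℵ : Cardinal.aleph0 < κ) (F : ι → Finset T) {A : Set ι} (hA : #A = κ)
    (hsmall : ∀ t, #({i ∈ A | t ∈ F i} : Set ι) < κ) :
    ∃ B ⊆ A, #B = κ ∧ ∀ i ∈ B, ∀ j ∈ B, i ≠ j → Disjoint (F i) (F j) := by
  obtain ⟨C, hC⟩ := zorn_subset
    {C : Set ι | C ⊆ A ∧ ∀ i ∈ C, ∀ j ∈ C, i ≠ j → Disjoint (F i) (F j)} (by
      intro c hc hchain
      refine ⟨⋃₀ c, ⟨?_, ?_⟩, fun s hs => Set.subset_sUnion_of_mem hs⟩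
      · exact Set.sUnion_subset fun s hs => (hc hs).1
      · rintro i ⟨s, hs, his⟩ j ⟨s', hs', hjs⟩ hij
        rcases hchain.total hs hs' with h | h
        · exact (hc hs').2 i (h his) j hjs hij
        · exact (hc hs).2 i his j (h hjs) hij)
  have hCA : C ⊆ A := hC.prop.1
  have hCle : #C ≤ κ := (Cardinal.mk_le_mk_of_subset hCA).trans hA.le
  rcases lt_or_eq_of_le hCle with hlt | heq
  · exfalso
    set bad : Set ι := ⋃ j ∈ C, ⋃ t ∈ (F j : Set T), {i ∈ A | t ∈ F i} with hbad
    have hbadlt : #bad < κ := by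
      refine mk_biUnion_lt hκ hlt fun j _ => ?_
      refine mk_biUnion_lt hκ ?_ fun t _ => hsmall t
      exact ((F j).finite_toSet.lt_aleph0).trans hℵ
    have hsub : A ⊆ C ∪ bad := by
      intro i hiA
      by_cases hib : i ∈ bad
      · exact Or.inr hib
      · left
        have hdisj : ∀ j ∈ C, Disjoint (F i) (F j) := by
          intro j hj
          rw [Finset.disjoint_left]
          intro t hti htj
          exact hib (Set.mem_biUnion hj (Set.mem_biUnion (by exact_mod_cast htj) ⟨hiA, hti⟩))
        have : C ∪ {i} ⊆ C := hC.2 ⟨Set.union_subset hCA (by simpa using hiA), by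
          rintro a (ha | ha) b (hb | hb) hab
          · exact hC.prop.2 a ha b hb hab
          · rw [Set.mem_singleton_iff] at hb; subst hb
            exact (hdisj a ha).symm
          · rw [Set.mem_singleton_iff] at ha; subst ha
            exact hdisj b hb
          · simp only [Set.mem_singleton_iff] at ha hb; exact absurd (ha.trans hb.symm) hab⟩
          Set.subset_union_left
        exact this (Or.inr rfl)
    have : κ ≤ #C + #bad := by
      calc κ = #A := hA.symm
        _ ≤ #(C ∪ bad : Set ι) := Cardinal.mk_le_mk_of_subset hsub
        _ ≤ #C + #bad := Cardinal.mk_union_le _ _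
    exact this.not_gt (Cardinal.add_lt_of_lt hκ.aleph0_le hlt hbadlt)
  · exact ⟨C, hCA, heq, hC.prop.2⟩

open scoped Classical in
lemma delta_aux {T : Type u} {κ : Cardinal.{u}} (hκ : κ.IsRegular) (hℵ : Cardinal.aleph0 < κ) :
    ∀ (m : ℕ) {ι : Type u} (F : ι → Finset T) (A : Set ι), #A = κ →
    (∀ i ∈ A, (F i).card = m) →
    ∃ B ⊆ A, #B = κ ∧ ∃ R : Finset T, (∀ i ∈ B, R ⊆ F i) ∧
      ∀ i ∈ B, ∀ j ∈ B, i ≠ j → F i ∩ F j = R := by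
  classical
  intro m
  induction m with
  | zero =>
    intro ι F A hA hcard
    refine ⟨A, le_refl _, hA, ∅, fun i _ => Finset.empty_subset _, fun i hi j hj _ => ?_⟩
    rw [Finset.card_eq_zero.1 (hcard i hi), Finset.empty_inter]
  | succ m ih =>
    intro ι F A hA hcard
    by_cases h : ∃ t, #({i ∈ A | t ∈ F i} : Set ι) = κ
    · obtain ⟨t, ht⟩ := h
      set A' : Set ι := {i ∈ A | t ∈ F i} with hA'
      have hcard' : ∀ i ∈ A', ((F i).erase t).card = m := by
        intro i hi
        rw [Finset.card_erase_of_mem hi.2, hcard i hi.1]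
        rfl
      obtain ⟨B, hBA', hBκ, R', hR'sub, hR'⟩ := ih (fun i => (F i).erase t) A' ht hcard'
      refine ⟨B, fun i hi => (hBA' hi).1, hBκ, insert t R', ?_, ?_⟩
      · intro i hi
        rw [Finset.insert_subset_iff]
        exact ⟨(hBA' hi).2, (hR'sub i hi).trans (Finset.erase_subset _ _)⟩
      · intro i hi j hj hij
        ext x
        simp only [Finset.mem_inter, Finset.mem_insert]
        constructor
        · rintro ⟨hxi, hxj⟩
          by_cases hx : x = t
          · exact Or.inl hx
          · right
            have := hR' i hi j hj hij
            rw [← this]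
            exact Finset.mem_inter.2 ⟨Finset.mem_erase.2 ⟨hx, hxi⟩, Finset.mem_erase.2 ⟨hx, hxj⟩⟩
        · rintro (rfl | hx)
          · exact ⟨(hBA' hi).2, (hBA' hj).2⟩
          · exact ⟨(Finset.erase_subset _ _) (hR'sub i hi hx),
              (Finset.erase_subset _ _) (hR'sub j hj hx)⟩
    · push_neg at h
      have hsmall : ∀ t, #({i ∈ A | t ∈ F i} : Set ι) < κ := fun t =>
        lt_of_le_of_ne ((Cardinal.mk_le_mk_of_subset fun i hi => hi.1).trans hA.le) (h t)
      obtain ⟨B, hBA, hBκ, hdisj⟩ := disjoint_subfamily hκ hℵ F hA hsmall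
      exact ⟨B, hBA, hBκ, ∅, fun i _ => Finset.empty_subset _, fun i hi j hj hij =>
        Finset.disjoint_iff_inter_eq_empty.1 (hdisj i hi j hj hij)⟩
open Cardinal Set

lemma nhds_small {T : Type u} {X : T → Type u} [∀ t, MetricSpace (X t)] {S : Set (∀ t, X t)}
    (U : Set S) (hU : IsOpen U) (x : S) (hx : x ∈ U) :
    ∃ (F : Finset T) (n : ℕ), ∀ y : S,
      (∀ t ∈ F, dist (y.1 t) (x.1 t) < 1 / ((n : ℝ) + 1)) → y ∈ U := by
  obtain ⟨V, hV, hVU⟩ := isOpen_induced_iff.1 hU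
  have hxV : x.1 ∈ V := by rw [← hVU] at hx; exact hx
  have hmem : V ∈ nhds x.1 := hV.mem_nhds hxV
  rw [nhds_pi] at hmem
  obtain ⟨I, hIfin, W, hW, hsub⟩ := Filter.mem_pi.1 hmem
  choose ε hεpos hball using fun t => Metric.mem_nhds_iff.1 (hW t)
  choose n hn using fun t => exists_nat_one_div_lt (hεpos t)
  set N := hIfin.toFinset.sup n with hN
  refine ⟨hIfin.toFinset, N, fun y hy => ?_⟩
  have : y.1 ∈ Set.pi I W := by
    intro t ht
    have htF : t ∈ hIfin.toFinset := hIfin.mem_toFinset.2 ht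
    have h1 : dist (y.1 t) (x.1 t) < 1 / ((N : ℝ) + 1) := hy t htF
    have hle : n t ≤ N := Finset.le_sup (f := n) htF
    have hle' : ((n t : ℝ)) ≤ (N : ℝ) := Nat.cast_le.2 hle
    have h2 : (1 : ℝ) / ((N : ℝ) + 1) ≤ 1 / ((n t : ℝ) + 1) := by
      apply one_div_le_one_div_of_le <;> [positivity; linarith]
    exact hball t (Metric.mem_ball.2 (lt_of_lt_of_le h1 (h2.trans (hn t).le)))
  rw [← hVU]
  exact hsub this

open scoped Classical in
lemma delta_system {ι T : Type u} {κ : Cardinal.{u}} (hκ : κ.IsRegular)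
    (hℵ : Cardinal.aleph0 < κ) (F : ι → Finset T) {A : Set ι} (hA : #A = κ) :
    ∃ B ⊆ A, #B = κ ∧ ∃ R : Finset T, (∀ i ∈ B, R ⊆ F i) ∧
      ∀ i ∈ B, ∀ j ∈ B, i ≠ j → F i ∩ F j = R := by
  obtain ⟨n₀, hA₁⟩ := pigeon hκ hA (fun i => ULift.up.{u} (F i).card)
    (Cardinal.mk_le_aleph0.trans_lt hℵ)
  obtain ⟨B, hBA, hBκ, R, hRsub, hRoot⟩ := delta_aux hκ hℵ n₀.down F _ hA₁
    (fun i hi => congrArg ULift.down hi.2)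
  exact ⟨B, fun i hi => (hBA hi).1, hBκ, R, hRsub, hRoot⟩

lemma caliber_of_dense {T : Type u} {X : T → Type u} [∀ t, MetricSpace (X t)]
    [∀ t, TopologicalSpace.SeparableSpace (X t)] (S : Set (∀ t, X t))
    (hdense : ∀ y : ∀ t, X t, ∀ ε : ℝ, 0 < ε → ∃ x ∈ S, ∀ t, dist (x t) (y t) < ε)
    {κ : Cardinal.{u}} (hκ : κ.IsRegular) (hℵ : Cardinal.aleph0 < κ) :
    ∀ (ι : Type u) (U : ι → Set S), Cardinal.mk ι = κ →
    (∀ i, IsOpen (U i) ∧ (U i).Nonempty) →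
    ∃ B : Set ι, Cardinal.mk B = κ ∧ (⋂ i ∈ B, U i).Nonempty := by
  intro ι U hι hU
  have H : ∀ i, ∃ (x : S), x ∈ U i ∧ ∃ (F : Finset T) (n : ℕ), ∀ y : S,
      (∀ t ∈ F, dist (y.1 t) (x.1 t) < 1 / ((n : ℝ) + 1)) → y ∈ U i := by
    intro i
    obtain ⟨x, hx⟩ := (hU i).2
    obtain ⟨F, n, h⟩ := nhds_small (U i) (hU i).1 x hx
    exact ⟨x, hx, F, n, h⟩
  choose x hxU F n key using H
  choose D hDc hDd using fun t => TopologicalSpace.exists_countable_dense (X t)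
  -- pigeonhole on n
  obtain ⟨n₀L, hA₁⟩ := pigeon hκ (A := (Set.univ : Set ι)) (by rwa [Cardinal.mk_univ])
    (fun i => ULift.up.{u} (n i)) (Cardinal.mk_le_aleph0.trans_lt hℵ)
  set ε : ℝ := 1 / ((n₀L.down : ℝ) + 1) with hεdef
  have hε : 0 < ε := by positivity
  -- delta system
  obtain ⟨B₁, hB₁A₁, hB₁κ, R, hRsub, hRoot⟩ := delta_system hκ hℵ F hA₁
  -- approximate roots by countable dense sets
  have hq : ∀ (i : ι) (t : T), ∃ d ∈ D t, dist ((x i).1 t) d < ε / 4 := fun i t =>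
    Metric.dense_iff.1 (hDd t) ((x i).1 t) (ε / 4) (by positivity) |>.imp
      fun d hd => ⟨hd.2, by simpa [Metric.mem_ball, dist_comm] using hd.1⟩
  choose q hqD hqdist using hq
  haveI : ∀ t : T, Countable (D t) := fun t => (hDc t).to_subtype
  obtain ⟨q₀, hB₂⟩ := pigeon hκ hB₁κ
    (f := fun i => (fun t : {t // t ∈ R} => (⟨q i t.1, hqD i t.1⟩ : D t.1)))
    (Cardinal.mk_le_aleph0.trans_lt hℵ)
  set B₂ : Set ι := {i ∈ B₁ | _ = q₀} with hB₂def
  have hB₂B₁ : B₂ ⊆ B₁ := fun i hi => hi.1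
  have hqeq : ∀ i ∈ B₂, ∀ j ∈ B₂, ∀ t ∈ R, q i t = q j t := by
    intro i hi j hj t ht
    have h1 := congrFun hi.2 ⟨t, ht⟩
    have h2 := congrFun hj.2 ⟨t, ht⟩
    rw [← h2] at h1
    exact congrArg Subtype.val h1
  have hclose : ∀ i ∈ B₂, ∀ j ∈ B₂, ∀ t ∈ R, dist ((x i).1 t) ((x j).1 t) < ε / 2 := by
    intro i hi j hj t ht
    calc dist ((x i).1 t) ((x j).1 t)
        ≤ dist ((x i).1 t) (q i t) + dist (q i t) ((x j).1 t) := dist_triangle _ _ _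
      _ < ε / 4 + ε / 4 := by
          refine add_lt_add (hqdist i t) ?_
          rw [hqeq i hi j hj t ht, dist_comm]
          exact hqdist j t
      _ = ε / 2 := by ring
  have hB₂ne : B₂.Nonempty := by
    rw [← Set.nonempty_coe_sort, ← Cardinal.mk_ne_zero_iff, hB₂]
    exact hκ.pos.ne'
  obtain ⟨i₀, hi₀⟩ := hB₂ne
  classical
  set z : ∀ t, X t := fun t =>
    if h : ∃ j ∈ B₂, t ∈ F j ∧ t ∉ R then (x h.choose).1 t else (x i₀).1 t with hzdef
  obtain ⟨w, hwS, hw⟩ := hdense z (ε / 2) (by positivity)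
  have hn : ∀ i ∈ B₂, n i = n₀L.down := fun i hi =>
    congrArg ULift.down (hB₁A₁ (hB₂B₁ hi)).2
  refine ⟨B₂, hB₂, ⟨⟨w, hwS⟩, Set.mem_iInter₂.2 fun i hi => ?_⟩⟩
  apply key i
  intro t htF
  rw [hn i hi]
  by_cases htR : t ∈ R
  · have hz : z t = (x i₀).1 t := by
      simp only [hzdef]
      exact dif_neg (by rintro ⟨j, _, _, hj⟩; exact hj htR)
    calc dist (w t) ((x i).1 t) ≤ dist (w t) (z t) + dist (z t) ((x i).1 t) :=
          dist_triangle _ _ _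
      _ < ε / 2 + ε / 2 := add_lt_add (hw t) (by rw [hz]; exact hclose i₀ hi₀ i hi t htR)
      _ = ε := by ring
  · have hex : ∃ j ∈ B₂, t ∈ F j ∧ t ∉ R := ⟨i, hi, htF, htR⟩
    have hz : z t = (x i).1 t := by
      simp only [hzdef]
      rw [dif_pos hex]
      by_contra hne
      have hmem : t ∈ F hex.choose ∩ F i := Finset.mem_inter.2 ⟨hex.choose_spec.2.1, htF⟩
      rw [hRoot _ (hB₂B₁ hex.choose_spec.1) i (hB₂B₁ hi) (fun h => hne (by rw [h]))] at hmem
      exact hex.choose_spec.2.2 hmem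
    calc dist (w t) ((x i).1 t) = dist (w t) (z t) := by rw [hz]
      _ < ε / 2 := hw t
      _ < ε := by linarith

lemma baire_caliber_stronglyBaire {Y : Type u} [TopologicalSpace Y] [BaireSpace Y]
    (hcal : ∀ κ : Cardinal.{u}, κ.IsRegular → Cardinal.aleph0 < κ → IsCaliber Y κ) :
    StronglyBaire Y := by
  intro α A B hAc hBc hAmono hBmono hAB hocc
  intro p hp
  by_contra hpcl
  set W := ⋃ ξ ∈ Set.Iio α, interior (B ξ) with hW
  set U := interior (⋃ ξ ∈ Set.Iio α, A ξ) \ closure W with hUdef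
  have hUopen : IsOpen U := isOpen_interior.sdiff isClosed_closure
  have hpU : p ∈ U := ⟨hp, hpcl⟩
  have hUne : U.Nonempty := ⟨p, hpU⟩
  have hUsub : U ⊆ ⋃ ξ ∈ Set.Iio α, A ξ := fun y hy => interior_subset hy.1
  have hUB : ∀ ξ < α, U ∩ interior (B ξ) = ∅ := by
    intro ξ hξ
    rw [Set.eq_empty_iff_forall_notMem]
    rintro y ⟨hyU, hyB⟩
    exact hyU.2 (subset_closure (Set.mem_biUnion hξ hyB))
  have hUnotsub : ∀ ξ < α, ¬ U ⊆ B ξ := by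
    intro ξ hξ hsub
    obtain ⟨y, hy⟩ := hUne
    have h2 : U ⊆ interior (B ξ) := hUopen.subset_interior_iff.2 hsub
    exact Set.eq_empty_iff_forall_notMem.1 (hUB ξ hξ) y ⟨hy, h2 hy⟩
  have hUcover : ∀ y ∈ U, ∃ ξ < α, y ∈ B ξ := by
    intro y hy
    obtain ⟨ξ, hξ, hyA⟩ := Set.mem_iUnion₂.1 (hUsub hy)
    exact ⟨ξ, hξ, hAB ξ hξ hyA⟩
  rcases Ordinal.zero_or_succ_or_isSuccLimit α with h0 | ⟨β, hβ⟩ | hlim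
  · subst h0
    obtain ⟨y, hy⟩ := hUne
    obtain ⟨ξ, hξ, -⟩ := Set.mem_iUnion₂.1 (hUsub hy)
    exact absurd hξ (not_lt_of_ge (zero_le (a := ξ)))
  · subst hβ
    refine hUnotsub β (Order.lt_succ β) fun y hy => ?_
    obtain ⟨ξ, hξ, hyB⟩ := hUcover y hy
    exact hBmono ξ β (Order.lt_succ_iff.1 hξ) (Order.lt_succ β) hyB
  · obtain ⟨f, hf⟩ := Ordinal.exists_fundamental_sequence α
    have hκreg : α.cof.IsRegular := Cardinal.isRegular_cof hlim
    set e := Ordinal.ToType.mk (o := α.cof.ord) with he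
    set ξfun : (α.cof.ord).ToType → Ordinal.{u} :=
      fun i => f (e.symm i).1 (e.symm i).2 with hξfun
    have hξlt : ∀ i, ξfun i < α := by
      intro i
      simp only [hξfun]
      exact hf.lt _
    have hcov : ∀ y ∈ U, ∃ i, y ∈ B (ξfun i) ∧
        ∀ j, i ≤ j → y ∈ B (ξfun j) := by
      intro y hy
      obtain ⟨η, hηα, hyB⟩ := hUcover y hy
      have hblt : η < Ordinal.blsub α.cof.ord f := hf.blsub_eq.symm ▸ hηα
      obtain ⟨b, hb, hηb⟩ := Ordinal.lt_blsub_iff.1 hblt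
      have key : ∀ j, e ⟨b, hb⟩ ≤ j → y ∈ B (ξfun j) := by
        intro j hj
        have h1 : (⟨b, hb⟩ : Set.Iio (α.cof.ord)) ≤ e.symm j := by
          rw [← e.symm_apply_apply ⟨b, hb⟩]
          exact e.symm.monotone hj
        have hmono : f b hb ≤ f (e.symm j).1 (e.symm j).2 :=
          hf.monotone hb (e.symm j).2 h1
        have hmono' : f b hb ≤ ξfun j := by rw [hξfun]; exact hmono
        exact hBmono η _ (hηb.trans hmono') (hξlt _) hyB
      exact ⟨e ⟨b, hb⟩, key _ le_rfl, key⟩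
    rcases eq_or_lt_of_le hκreg.aleph0_le with hℵeq | hℵlt
    · -- countable cofinality: Baire argument
      haveI : Countable (α.cof.ord).ToType := by
        rw [← Cardinal.mk_le_aleph0_iff, Cardinal.mk_toType, Cardinal.card_ord, ← hℵeq]
      haveI : Nonempty (α.cof.ord).ToType := by
        rw [Ordinal.toType_nonempty_iff_ne_zero, Ne, Cardinal.ord_eq_zero, ← hℵeq]
        exact Cardinal.aleph0_ne_zero
      have hcl : ∀ i : (α.cof.ord).ToType, IsClosed (B (ξfun i) ∪ Uᶜ) :=
        fun i => (hBc _ (hξlt i)).union (isClosed_compl_iff.2 hUopen)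
      have hcover : (⋃ i, (B (ξfun i) ∪ Uᶜ)) = Set.univ := by
        rw [Set.eq_univ_iff_forall]
        intro y
        by_cases hyU : y ∈ U
        · obtain ⟨i, hi, -⟩ := hcov y hyU
          exact Set.mem_iUnion.2 ⟨i, Or.inl hi⟩
        · exact Set.mem_iUnion.2 ⟨Classical.arbitrary _, Or.inr hyU⟩
      have hd := dense_iUnion_interior_of_closed hcl hcover
      obtain ⟨y, hyU, hyI⟩ := hd.inter_open_nonempty U hUopen hUne
      obtain ⟨i, hyi⟩ := Set.mem_iUnion.1 hyI
      have hVsub : U ∩ interior (B (ξfun i) ∪ Uᶜ) ⊆ B (ξfun i) := by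
        rintro z ⟨hzU, hzI⟩
        rcases interior_subset hzI with h | h
        · exact h
        · exact absurd hzU h
      have hVopen : IsOpen (U ∩ interior (B (ξfun i) ∪ Uᶜ)) :=
        hUopen.inter isOpen_interior
      have hsub2 : U ∩ interior (B (ξfun i) ∪ Uᶜ) ⊆ interior (B (ξfun i)) :=
        hVopen.subset_interior_iff.2 hVsub
      exact Set.eq_empty_iff_forall_notMem.1 (hUB _ (hξlt i)) y ⟨hyU, hsub2 ⟨hyU, hyi⟩⟩
    · -- uncountable regular cofinality: caliber argument
      set V : (α.cof.ord).ToType → Set Y := fun i => U \ B (ξfun i) with hV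
      have hVprop : ∀ i, IsOpen (V i) ∧ (V i).Nonempty := by
        intro i
        constructor
        · exact hUopen.sdiff (hBc _ (hξlt i))
        · rw [Set.nonempty_iff_ne_empty]
          intro hemp
          exact hUnotsub _ (hξlt i) (Set.diff_eq_empty.1 hemp)
      obtain ⟨Bs, hBsκ, y, hy⟩ := hcal α.cof hκreg hℵlt (α.cof.ord).ToType V
        (by rw [Cardinal.mk_toType, Cardinal.card_ord]) hVprop
      have hBsne : Bs.Nonempty := by
        rw [← Set.nonempty_coe_sort, ← Cardinal.mk_ne_zero_iff, hBsκ]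
        exact hκreg.pos.ne'
      obtain ⟨i₁, hi₁⟩ := hBsne
      have hyU : y ∈ U := (Set.mem_iInter₂.1 hy i₁ hi₁).1
      obtain ⟨i, -, hicov⟩ := hcov y hyU
      have hex : ∃ j ∈ Bs, i ≤ j := by
        by_contra hno
        push_neg at hno
        have hsub : Bs ⊆ Set.Iio i := fun j hj => hno j hj
        have hle : #Bs ≤ #(Set.Iio i) := Cardinal.mk_le_mk_of_subset hsub
        rw [hBsκ] at hle
        exact hle.not_gt (Cardinal.mk_Iio_ord_toType i)
      obtain ⟨j, hjBs, hij⟩ := hex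
      exact (Set.mem_iInter₂.1 hy j hjBs).2 (hicov j hij)

/-- Let `(X t)` be separable metric spaces and `S ⊆ ∏ t, X t` a Baire space (with the
product topology) which is dense in `∏ t, X t` for the topology of uniform convergence
(equivalently, for the sup-metric: every point of the product can be uniformly
approximated by points of `S`). Then every uncountable regular cardinal is a caliber of
`S`, and `S` is a strongly Baire space. -/
theorem dense_uniform_baire_caliber_stronglyBaire {T : Type u} (X : T → Type u)
    [∀ t, MetricSpace (X t)] [∀ t, TopologicalSpace.SeparableSpace (X t)]
    (S : Set (∀ t, X t)) [BaireSpace S]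
    (hdense : ∀ y : ∀ t, X t, ∀ ε : ℝ, 0 < ε → ∃ x ∈ S, ∀ t, dist (x t) (y t) < ε) :
    (∀ κ : Cardinal.{u}, κ.IsRegular → Cardinal.aleph0 < κ → IsCaliber S κ)
    ∧ StronglyBaire S := by
  have hcal : ∀ κ : Cardinal.{u}, κ.IsRegular → Cardinal.aleph0 < κ → IsCaliber S κ :=
    fun κ hκ hℵ => caliber_of_dense S hdense hκ hℵ
  exact ⟨hcal, baire_caliber_stronglyBaire hcal⟩
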